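/- Let Y and Z be nonzero positive semidefinite complex matrices of the same size. Then (1/2)·‖Y/tr(Y) − Z/tr(Z)‖₁ ≤ ‖Y − Z‖₁ / max{tr(Y), tr(Z)}, where ‖·‖₁ denotes the trace norm (the sum of the singular values). -/

import Mathlib

open scoped Matrix.Norms.L2Operator ComplexOrder
open Matrix

/-- The trace norm (sum of singular values) of a square complex matrix,
realized as `tr √(Mᴴ M)`. -/
noncomputable def traceNorm {n : ℕ} (M : Matrix (Fin n) (Fin n) ℂ) : ℝ :=
  (((Matrix.posSemidef_conjTranspose_mul_self M).1.eigenvectorUnitary.1 *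
    diagonal (((↑) : ℝ → ℂ) ∘ (√·) ∘ (Matrix.posSemidef_conjTranspose_mul_self M).1.eigenvalues) *
    (star (Matrix.posSemidef_conjTranspose_mul_self M).1.eigenvectorUnitary :
      Matrix (Fin n) (Fin n) ℂ)).trace).re

namespace TN

variable {n : ℕ}

/-- trace of a unitary conjugation of a diagonal. -/
lemma trace_conj (V : Matrix.unitaryGroup (Fin n) ℂ) (d : Fin n → ℂ) :
    ((V : Matrix (Fin n) (Fin n) ℂ) * diagonal d * star (V : Matrix (Fin n) (Fin n) ℂ)).trace
      = ∑ i, d i := by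
  rw [trace_mul_cycle, Unitary.coe_star_mul_self, one_mul, trace_diagonal]

lemma conj_mul (V : Matrix.unitaryGroup (Fin n) ℂ) (d e : Fin n → ℂ) :
    ((V : Matrix (Fin n) (Fin n) ℂ) * diagonal d * star (V : Matrix (Fin n) (Fin n) ℂ)) *
      ((V : Matrix (Fin n) (Fin n) ℂ) * diagonal e * star (V : Matrix (Fin n) (Fin n) ℂ))
    = (V : Matrix (Fin n) (Fin n) ℂ) * diagonal (d * e) * star (V : Matrix (Fin n) (Fin n) ℂ) := by
  have h : star (V : Matrix (Fin n) (Fin n) ℂ) * (V : Matrix (Fin n) (Fin n) ℂ) = 1 :=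
    Unitary.coe_star_mul_self V
  calc ((V : Matrix (Fin n) (Fin n) ℂ) * diagonal d * star (V : Matrix (Fin n) (Fin n) ℂ)) *
      ((V : Matrix (Fin n) (Fin n) ℂ) * diagonal e * star (V : Matrix (Fin n) (Fin n) ℂ))
      = (V : Matrix (Fin n) (Fin n) ℂ) * diagonal d *
        (star (V : Matrix (Fin n) (Fin n) ℂ) * (V : Matrix (Fin n) (Fin n) ℂ)) *
        diagonal e * star (V : Matrix (Fin n) (Fin n) ℂ) := by
        simp only [mul_assoc]
    _ = _ := by rw [h, mul_one, mul_assoc _ (diagonal d), diagonal_mul_diagonal]; rfl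

open scoped MatrixOrder in
lemma tn_eq (M S : Matrix (Fin n) (Fin n) ℂ) (hS : S.PosSemidef) (h : S * S = Mᴴ * M) :
    traceNorm M = S.trace.re := by
  have h0 : (0 : Matrix (Fin n) (Fin n) ℂ) ≤ Mᴴ * M :=
    (Matrix.posSemidef_conjTranspose_mul_self M).nonneg
  have e : (Matrix.posSemidef_conjTranspose_mul_self M).1.eigenvectorUnitary.1 *
      diagonal (((↑) : ℝ → ℂ) ∘ (√·) ∘ (Matrix.posSemidef_conjTranspose_mul_self M).1.eigenvalues) *
      (star (Matrix.posSemidef_conjTranspose_mul_self M).1.eigenvectorUnitary :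
        Matrix (Fin n) (Fin n) ℂ) = S := by
    have h1 : (Matrix.posSemidef_conjTranspose_mul_self M).1.eigenvectorUnitary.1 *
        diagonal (((↑) : ℝ → ℂ) ∘ (√·) ∘ (Matrix.posSemidef_conjTranspose_mul_self M).1.eigenvalues) *
        (star (Matrix.posSemidef_conjTranspose_mul_self M).1.eigenvectorUnitary :
          Matrix (Fin n) (Fin n) ℂ)
        = (Matrix.posSemidef_conjTranspose_mul_self M).1.cfc Real.sqrt := by
      rw [IsHermitian.cfc, Unitary.conjStarAlgAut_apply]; rfl
    rw [h1, ← IsHermitian.cfc_eq, ← cfcₙ_eq_cfc, ← CFC.sqrt_eq_real_sqrt _ h0]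
    exact CFC.sqrt_unique h hS.nonneg
  rw [traceNorm, e]

/-- identification of the sqrt appearing in `traceNorm` for a Hermitian matrix -/
lemma sqrt_eq (A : Matrix (Fin n) (Fin n) ℂ) (hA : A.IsHermitian) :
    traceNorm A
      = ((hA.eigenvectorUnitary : Matrix (Fin n) (Fin n) ℂ) *
        diagonal (fun i => ((|hA.eigenvalues i| : ℝ) : ℂ)) *
        star (hA.eigenvectorUnitary : Matrix (Fin n) (Fin n) ℂ)).trace.re := by
  set V := hA.eigenvectorUnitary
  set S := (V : Matrix (Fin n) (Fin n) ℂ) * diagonal (fun i => ((|hA.eigenvalues i| : ℝ) : ℂ)) *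
    star (V : Matrix (Fin n) (Fin n) ℂ) with hS
  have hSpsd : S.PosSemidef := by
    apply Matrix.PosSemidef.mul_mul_conjTranspose_same
    refine Matrix.posSemidef_diagonal_iff.mpr fun i => ?_
    exact_mod_cast Complex.zero_le_real.mpr (abs_nonneg _)
  have hsq : S ^ 2 = Aᴴ * A := by
    rw [pow_two, hS, conj_mul]
    conv_rhs => rw [hA.eq, hA.spectral_theorem, Unitary.conjStarAlgAut_apply]
    rw [conj_mul]
    have hd : ((fun i => ((|hA.eigenvalues i| : ℝ) : ℂ)) * fun i => ((|hA.eigenvalues i| : ℝ) : ℂ))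
        = (RCLike.ofReal ∘ hA.eigenvalues * RCLike.ofReal ∘ hA.eigenvalues) := by
      funext i
      show ((|hA.eigenvalues i| : ℝ) : ℂ) * ((|hA.eigenvalues i| : ℝ) : ℂ)
          = ((hA.eigenvalues i : ℝ) : ℂ) * ((hA.eigenvalues i : ℝ) : ℂ)
      rw [← Complex.ofReal_mul, ← Complex.ofReal_mul, abs_mul_abs_self]
    rw [hd]
  exact tn_eq A S hSpsd (by rw [← pow_two]; exact hsq)

lemma traceNorm_hermitian (A : Matrix (Fin n) (Fin n) ℂ) (hA : A.IsHermitian) :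
    traceNorm A = ∑ i, |hA.eigenvalues i| := by
  rw [sqrt_eq A hA, trace_conj, ← Complex.ofReal_sum, Complex.ofReal_re]

lemma trace_hermitian (A : Matrix (Fin n) (Fin n) ℂ) (hA : A.IsHermitian) :
    A.trace = ((∑ i, hA.eigenvalues i : ℝ) : ℂ) := by
  conv_lhs => rw [hA.spectral_theorem, Unitary.conjStarAlgAut_apply]
  rw [trace_conj]
  show ∑ i, ((hA.eigenvalues i : ℝ) : ℂ) = _
  rw [← Complex.ofReal_sum]


lemma conj_entry (V U : Matrix (Fin n) (Fin n) ℂ) (i : Fin n) :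
    (Vᴴ * U * V) i i = star (fun j => V j i) ⬝ᵥ (U *ᵥ fun j => V j i) := by
  simp only [mul_apply, conjTranspose_apply, dotProduct, mulVec, Pi.star_apply,
    Finset.sum_mul, Finset.mul_sum]
  rw [Finset.sum_comm]
  apply Finset.sum_congr rfl
  intro j _
  apply Finset.sum_congr rfl
  intro k _
  ring

lemma re_trace_le (A U : Matrix (Fin n) (Fin n) ℂ) (hA : A.IsHermitian)
    (hU : ∀ x : Fin n → ℂ, ‖star x ⬝ᵥ (U *ᵥ x)‖ ≤ (star x ⬝ᵥ x).re) :
    ((U * A).trace).re ≤ traceNorm A := by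
  set V : Matrix (Fin n) (Fin n) ℂ := (hA.eigenvectorUnitary : Matrix (Fin n) (Fin n) ℂ) with hV
  have hVu : Vᴴ * V = 1 := by
    rw [← star_eq_conjTranspose]; exact Unitary.coe_star_mul_self hA.eigenvectorUnitary
  have htr : (U * A).trace
      = ∑ i, (Vᴴ * U * V) i i * ((hA.eigenvalues i : ℝ) : ℂ) := by
    conv_lhs => rw [hA.spectral_theorem, Unitary.conjStarAlgAut_apply]
    rw [show U * (V * diagonal (RCLike.ofReal ∘ hA.eigenvalues) * star V)
        = (U * V * diagonal (RCLike.ofReal ∘ hA.eigenvalues)) * star V by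
      simp only [mul_assoc]]
    rw [trace_mul_comm, star_eq_conjTranspose, ← mul_assoc, ← mul_assoc]
    simp [Matrix.trace, Matrix.mul_diagonal, Matrix.diag]
  have hbound : ∀ i : Fin n, ((Vᴴ * U * V) i i * ((hA.eigenvalues i : ℝ) : ℂ)).re
      ≤ |hA.eigenvalues i| := by
    intro i
    set x : Fin n → ℂ := fun j => V j i with hx
    have h1 : (Vᴴ * U * V) i i = star x ⬝ᵥ (U *ᵥ x) := conj_entry V U i
    have h2 : star x ⬝ᵥ x = 1 := by
      have h2' := conj_entry V 1 i
      rw [mul_one, hVu, one_mulVec] at h2'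
      rw [hx, ← h2', Matrix.one_apply_eq]
    have h3 : ‖(Vᴴ * U * V) i i‖ ≤ 1 := by
      rw [h1]
      calc ‖star x ⬝ᵥ (U *ᵥ x)‖ ≤ (star x ⬝ᵥ x).re := hU x
        _ = 1 := by rw [h2]; simp
    have h4 : (((Vᴴ * U * V) i i) * ((hA.eigenvalues i : ℝ) : ℂ)).re
        = ((Vᴴ * U * V) i i).re * hA.eigenvalues i := by
      rw [mul_comm, Complex.re_ofReal_mul, mul_comm]
    rw [h4]
    calc ((Vᴴ * U * V) i i).re * hA.eigenvalues i
        ≤ |((Vᴴ * U * V) i i).re * hA.eigenvalues i| := le_abs_self _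
      _ = |((Vᴴ * U * V) i i).re| * |hA.eigenvalues i| := abs_mul _ _
      _ ≤ 1 * |hA.eigenvalues i| := by
          apply mul_le_mul_of_nonneg_right _ (abs_nonneg _)
          exact le_trans (Complex.abs_re_le_norm _) h3
      _ = |hA.eigenvalues i| := one_mul _
  rw [htr, Complex.re_sum, traceNorm_hermitian A hA]
  exact Finset.sum_le_sum fun i _ => hbound i

lemma exists_dual (A : Matrix (Fin n) (Fin n) ℂ) (hA : A.IsHermitian) :
    ∃ U : Matrix (Fin n) (Fin n) ℂ,
      (∀ x : Fin n → ℂ, ‖star x ⬝ᵥ (U *ᵥ x)‖ ≤ (star x ⬝ᵥ x).re) ∧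
      ((U * A).trace).re = traceNorm A := by
  set V := hA.eigenvectorUnitary with hV
  set s : Fin n → ℂ := fun i => ((if 0 ≤ hA.eigenvalues i then (1:ℝ) else -1 : ℝ) : ℂ) with hs
  refine ⟨(V : Matrix (Fin n) (Fin n) ℂ) * diagonal s * star (V : Matrix (Fin n) (Fin n) ℂ),
    ?_, ?_⟩
  · intro x
    set y : Fin n → ℂ := star (V : Matrix (Fin n) (Fin n) ℂ) *ᵥ x with hy
    have hrow : star x ᵥ* (V : Matrix (Fin n) (Fin n) ℂ) = star y := by
      rw [hy, star_mulVec, star_eq_conjTranspose, conjTranspose_conjTranspose]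
    have hlhs : star x ⬝ᵥ (((V : Matrix (Fin n) (Fin n) ℂ) * diagonal s *
        star (V : Matrix (Fin n) (Fin n) ℂ)) *ᵥ x) = ∑ i, s i * (star y i * y i) := by
      rw [← mulVec_mulVec, ← mulVec_mulVec, dotProduct_mulVec, hrow, ← hy]
      simp only [dotProduct, mulVec_diagonal]
      apply Finset.sum_congr rfl
      intro i _
      simp only [Pi.star_apply]
      ring
    have h1 : star y ⬝ᵥ y = star x ⬝ᵥ x := by
      calc star y ⬝ᵥ y = (star x ᵥ* (V : Matrix (Fin n) (Fin n) ℂ)) ⬝ᵥ y := by rw [hrow]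
        _ = star x ⬝ᵥ ((V : Matrix (Fin n) (Fin n) ℂ) *ᵥ y) := (dotProduct_mulVec _ _ _).symm
        _ = star x ⬝ᵥ (((V : Matrix (Fin n) (Fin n) ℂ) *
              star (V : Matrix (Fin n) (Fin n) ℂ)) *ᵥ x) := by rw [hy, mulVec_mulVec]
        _ = star x ⬝ᵥ x := by
              rw [(Matrix.mem_unitaryGroup_iff).mp (hA.eigenvectorUnitary).2, one_mulVec]
    have hrhs : star x ⬝ᵥ x = ∑ i, star y i * y i := by rw [← h1]; rfl
    have habs : ∀ i : Fin n, ‖s i * (star y i * y i)‖ = (star y i * y i).re := by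
      intro i
      have hsy : star y i * y i = ((Complex.normSq (y i) : ℝ) : ℂ) := by
        simp only [Pi.star_apply, Complex.star_def]
        rw [mul_comm, Complex.mul_conj]
      have hsabs : ‖s i‖ = 1 := by
        rw [hs]
        simp only
        split_ifs <;> simp
      rw [norm_mul, hsabs, one_mul, hsy, Complex.norm_real, Real.norm_eq_abs, Complex.ofReal_re,
        abs_of_nonneg (Complex.normSq_nonneg _)]
    rw [hlhs, hrhs, Complex.re_sum]
    calc ‖∑ i, s i * (star y i * y i)‖
        ≤ ∑ i, ‖s i * (star y i * y i)‖ := norm_sum_le _ _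
      _ = ∑ i, (star y i * y i).re := Finset.sum_congr rfl fun i _ => habs i
  · have hUA : ((V : Matrix (Fin n) (Fin n) ℂ) * diagonal s *
        star (V : Matrix (Fin n) (Fin n) ℂ)) * A
        = (V : Matrix (Fin n) (Fin n) ℂ) * diagonal (s * (RCLike.ofReal ∘ hA.eigenvalues)) *
          star (V : Matrix (Fin n) (Fin n) ℂ) := by
      conv_lhs => rw [hA.spectral_theorem, Unitary.conjStarAlgAut_apply]
      exact conj_mul V s (RCLike.ofReal ∘ hA.eigenvalues)
    rw [hUA, trace_conj]
    have hterm : ∀ i : Fin n, (s * ((RCLike.ofReal ∘ hA.eigenvalues : Fin n → ℂ))) i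
        = ((|hA.eigenvalues i| : ℝ) : ℂ) := by
      intro i
      simp only [Pi.mul_apply, Function.comp_apply, hs]
      split_ifs with h
      · rw [abs_of_nonneg h, Complex.ofReal_one, one_mul]
        rfl
      · rw [abs_of_neg (lt_of_not_ge h), Complex.ofReal_neg, Complex.ofReal_neg,
          Complex.ofReal_one, neg_one_mul]
        show -((hA.eigenvalues i : ℝ) : ℂ) = _
        rfl
    rw [Finset.sum_congr rfl fun i _ => hterm i, ← Complex.ofReal_sum, Complex.ofReal_re,
      traceNorm_hermitian A hA]

lemma traceNorm_add_le (A B : Matrix (Fin n) (Fin n) ℂ)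
    (hA : A.IsHermitian) (hB : B.IsHermitian) :
    traceNorm (A + B) ≤ traceNorm A + traceNorm B := by
  obtain ⟨U, hU, hEq⟩ := exists_dual (A + B) (hA.add hB)
  rw [← hEq, mul_add, trace_add, Complex.add_re]
  exact add_le_add (re_trace_le A U hA hU) (re_trace_le B U hB hU)

lemma abs_re_trace_le (A : Matrix (Fin n) (Fin n) ℂ) (hA : A.IsHermitian) :
    |A.trace.re| ≤ traceNorm A := by
  rw [trace_hermitian A hA, Complex.ofReal_re, traceNorm_hermitian A hA]
  exact Finset.abs_sum_le_sum_abs _ _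

lemma traceNorm_nonneg (A : Matrix (Fin n) (Fin n) ℂ) (hA : A.IsHermitian) :
    0 ≤ traceNorm A := by
  rw [traceNorm_hermitian A hA]
  positivity

lemma traceNorm_psd (A : Matrix (Fin n) (Fin n) ℂ) (hA : A.PosSemidef) :
    traceNorm A = A.trace.re := by
  rw [traceNorm_hermitian A hA.1, trace_hermitian A hA.1, Complex.ofReal_re]
  exact Finset.sum_congr rfl fun i _ => abs_of_nonneg (hA.eigenvalues_nonneg i)

lemma trace_re_pos (A : Matrix (Fin n) (Fin n) ℂ) (hA : A.PosSemidef) (h0 : A ≠ 0) :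
    0 < A.trace.re := by
  rw [trace_hermitian A hA.1, Complex.ofReal_re]
  rcases (Finset.sum_nonneg fun i _ => hA.eigenvalues_nonneg i).lt_or_eq with h | h
  · exact h
  · exfalso
    apply h0
    have hz : ∀ i ∈ Finset.univ, hA.1.eigenvalues i = 0 :=
      (Finset.sum_eq_zero_iff_of_nonneg fun i _ => hA.eigenvalues_nonneg i).mp h.symm
    have : diagonal (RCLike.ofReal ∘ hA.1.eigenvalues : Fin n → ℂ) = 0 := by
      have : (RCLike.ofReal ∘ hA.1.eigenvalues : Fin n → ℂ) = 0 := by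
        funext i
        simp [hz i (Finset.mem_univ i)]
      rw [this]
      exact Matrix.diagonal_zero
    conv_lhs => rw [hA.1.spectral_theorem, Unitary.conjStarAlgAut_apply]
    rw [this, mul_zero, zero_mul]

open scoped MatrixOrder in
lemma traceNorm_neg (M : Matrix (Fin n) (Fin n) ℂ) : traceNorm (-M) = traceNorm M := by
  have hP : (0 : Matrix (Fin n) (Fin n) ℂ) ≤ Mᴴ * M :=
    (Matrix.posSemidef_conjTranspose_mul_self M).nonneg
  have hS : (CFC.sqrt (Mᴴ * M)).PosSemidef := nonneg_iff_posSemidef.mp (CFC.sqrt_nonneg _)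
  have hsq : CFC.sqrt (Mᴴ * M) * CFC.sqrt (Mᴴ * M) = Mᴴ * M := CFC.sqrt_mul_sqrt_self _ hP
  rw [tn_eq M _ hS hsq, tn_eq (-M) _ hS (by simpa using hsq)]

open scoped MatrixOrder in
lemma traceNorm_smul (c : ℝ) (hc : 0 ≤ c) (M : Matrix (Fin n) (Fin n) ℂ) :
    traceNorm ((c : ℂ) • M) = c * traceNorm M := by
  have hPnn : (0 : Matrix (Fin n) (Fin n) ℂ) ≤ Mᴴ * M :=
    (Matrix.posSemidef_conjTranspose_mul_self M).nonneg
  set P := CFC.sqrt (Mᴴ * M) with hP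
  have hPpsd : P.PosSemidef := nonneg_iff_posSemidef.mp (CFC.sqrt_nonneg _)
  have hS : ((c : ℂ) • P).PosSemidef := hPpsd.smul (Complex.zero_le_real.mpr hc)
  have hsq : ((c : ℂ) • P) ^ 2 = ((c : ℂ) • M)ᴴ * ((c : ℂ) • M) := by
    rw [pow_two, conjTranspose_smul, Complex.star_def, Complex.conj_ofReal,
      smul_mul_assoc, smul_mul_assoc, mul_smul_comm, mul_smul_comm,
      hP, CFC.sqrt_mul_sqrt_self _ hPnn]
  have hkey := tn_eq ((c : ℂ) • M) _ hS (by rw [← pow_two]; exact hsq)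
  rw [hkey, trace_smul, smul_eq_mul, Complex.re_ofReal_mul,
    tn_eq M P hPpsd (CFC.sqrt_mul_sqrt_self _ hPnn)]

lemma herm_smul (c : ℝ) (A : Matrix (Fin n) (Fin n) ℂ) (hA : A.IsHermitian) :
    ((c : ℂ) • A).IsHermitian := by
  rw [IsHermitian, conjTranspose_smul, Complex.star_def, Complex.conj_ofReal, hA.eq]

lemma core (Y Z : Matrix (Fin n) (Fin n) ℂ)
    (hY : Y.PosSemidef) (hY0 : Y ≠ 0) (hZ : Z.PosSemidef) (hZ0 : Z ≠ 0)
    (hle : Z.trace.re ≤ Y.trace.re) :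
    traceNorm (Y.trace⁻¹ • Y - Z.trace⁻¹ • Z) ≤ 2 * traceNorm (Y - Z) / Y.trace.re := by
  set a := Y.trace.re with hadef
  set b := Z.trace.re with hbdef
  have ha : 0 < a := trace_re_pos Y hY hY0
  have hb : 0 < b := trace_re_pos Z hZ hZ0
  have htrY : Y.trace = (a : ℂ) := by
    rw [trace_hermitian Y hY.1] at hadef ⊢
    rw [hadef, Complex.ofReal_re]
  have htrZ : Z.trace = (b : ℂ) := by
    rw [trace_hermitian Z hZ.1] at hbdef ⊢
    rw [hbdef, Complex.ofReal_re]
  set T := traceNorm (Y - Z) with hT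
  have hT0 : 0 ≤ T := traceNorm_nonneg _ (hY.1.sub hZ.1)
  have hdec : Y.trace⁻¹ • Y - Z.trace⁻¹ • Z
      = ((a⁻¹ : ℝ) : ℂ) • (Y - Z) + -(((b⁻¹ - a⁻¹ : ℝ) : ℂ) • Z) := by
    rw [htrY, htrZ, ← Complex.ofReal_inv, ← Complex.ofReal_inv]
    push_cast
    module
  have hherm2 : (((b⁻¹ - a⁻¹ : ℝ) : ℂ) • Z).IsHermitian := herm_smul _ _ hZ.1
  have hherm2' : (-(((b⁻¹ - a⁻¹ : ℝ) : ℂ) • Z)).IsHermitian := hherm2.neg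
  have htri : traceNorm (Y.trace⁻¹ • Y - Z.trace⁻¹ • Z)
      ≤ traceNorm (((a⁻¹ : ℝ) : ℂ) • (Y - Z)) + traceNorm (-(((b⁻¹ - a⁻¹ : ℝ) : ℂ) • Z)) := by
    rw [hdec]
    exact traceNorm_add_le _ _ (herm_smul _ _ (hY.1.sub hZ.1)) hherm2'
  have h1 : traceNorm (((a⁻¹ : ℝ) : ℂ) • (Y - Z)) = a⁻¹ * T :=
    traceNorm_smul _ (by positivity) _
  have hinv : a⁻¹ ≤ b⁻¹ := by
    exact inv_anti₀ hb hle
  have h2 : traceNorm (-(((b⁻¹ - a⁻¹ : ℝ) : ℂ) • Z)) = (b⁻¹ - a⁻¹) * b := by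
    rw [traceNorm_neg, traceNorm_smul _ (by linarith) _, traceNorm_psd Z hZ, ← hbdef]
  have h3 : (b⁻¹ - a⁻¹) * b = (a - b) * a⁻¹ := by
    field_simp
  have h4 : a - b ≤ T := by
    have := abs_re_trace_le (Y - Z) (hY.1.sub hZ.1)
    rw [trace_sub, Complex.sub_re] at this
    calc a - b ≤ |a - b| := le_abs_self _
      _ ≤ T := by rw [hadef, hbdef]; exact this
  calc traceNorm (Y.trace⁻¹ • Y - Z.trace⁻¹ • Z)
      ≤ a⁻¹ * T + (b⁻¹ - a⁻¹) * b := by rw [← h1, ← h2]; exact htri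
    _ = a⁻¹ * T + (a - b) * a⁻¹ := by rw [h3]
    _ ≤ a⁻¹ * T + T * a⁻¹ := by
        apply add_le_add le_rfl
        apply mul_le_mul_of_nonneg_right h4 (by positivity)
    _ = 2 * T / a := by field_simp; ring

end TN


/-- Claim 1: distance between normalized PSD matrices. -/
theorem normalized_psd_trace_dist {n : ℕ} (Y Z : Matrix (Fin n) (Fin n) ℂ)
    (hY : Y.PosSemidef) (hY0 : Y ≠ 0) (hZ : Z.PosSemidef) (hZ0 : Z ≠ 0) :
    (1/2) * traceNorm (Y.trace⁻¹ • Y - Z.trace⁻¹ • Z) ≤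
      traceNorm (Y - Z) / max Y.trace.re Z.trace.re := by
  rcases le_total Z.trace.re Y.trace.re with h | h
  · rw [max_eq_left h]
    have hc := TN.core Y Z hY hY0 hZ hZ0 h
    calc (1/2 : ℝ) * traceNorm (Y.trace⁻¹ • Y - Z.trace⁻¹ • Z)
        ≤ (1/2) * (2 * traceNorm (Y - Z) / Y.trace.re) :=
          mul_le_mul_of_nonneg_left hc (by norm_num)
      _ = traceNorm (Y - Z) / Y.trace.re := by ring
  · rw [max_eq_right h]
    have hc := TN.core Z Y hZ hZ0 hY hY0 h
    have hb : 0 < Z.trace.re := TN.trace_re_pos Z hZ hZ0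
    have e1 : Y.trace⁻¹ • Y - Z.trace⁻¹ • Z = -(Z.trace⁻¹ • Z - Y.trace⁻¹ • Y) :=
      (neg_sub _ _).symm
    have e2 : Z - Y = -(Y - Z) := (neg_sub _ _).symm
    rw [e1, TN.traceNorm_neg]
    rw [e2, TN.traceNorm_neg] at hc
    calc (1/2 : ℝ) * traceNorm (Z.trace⁻¹ • Z - Y.trace⁻¹ • Y)
        ≤ (1/2) * (2 * traceNorm (Y - Z) / Z.trace.re) :=
          mul_le_mul_of_nonneg_left hc (by norm_num)
      _ = traceNorm (Y - Z) / Z.trace.re := by ring
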